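/- For every function H : Fin 2 → Fin 2, it holds that (O_H ⊗ O_H) ψ = (1/√2)( e_{(0, H 0)} ⊗ u + u ⊗ e_{(0, H 0)} ), where u = (e_{(1,0)} + e_{(1,1)})/√2. In words: after both parties query the oracle for H once on the shared state ψ, the joint state equals the result of applying the cloning map φ ↦ (u ⊗ φ + φ ⊗ u)/√2 (with u playing the role of the orthogonal vector ⊥) to the basis vector |0, H(0)⟩. -/

import Mathlib

open Matrix Kronecker

/-- Standard basis vector `e_{(x,y)}` of the two-qubit space `ℂ^4 = ℂ^{Fin 2 × Fin 2}`. -/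
def e2 (x y : Fin 2) : Fin 2 × Fin 2 → ℂ :=
  fun p => if p = (x, y) then 1 else 0

/-- The oracle unitary `O_H`, determined by `O_H e_{(x,y)} = e_{(x, y + H x)}`. -/
def oracleU (H : Fin 2 → Fin 2) : Matrix (Fin 2 × Fin 2) (Fin 2 × Fin 2) ℂ :=
  fun p q => if p.1 = q.1 ∧ p.2 = q.2 + H q.1 then 1 else 0

/-- The vector `u = |1⟩⊗|+⟩ = (e_{(1,0)} + e_{(1,1)})/√2`. -/
noncomputable def uVec : Fin 2 × Fin 2 → ℂ :=
  fun p => (e2 1 0 p + e2 1 1 p) / ((Real.sqrt 2 : ℝ) : ℂ)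

/-- Kronecker (tensor) product of two vectors in `ℂ^4`. -/
def tensVec (v w : Fin 2 × Fin 2 → ℂ) : (Fin 2 × Fin 2) × (Fin 2 × Fin 2) → ℂ :=
  fun p => v p.1 * w p.2

/-- The shared state `ψ = (1/√2)(e_{(0,0)} ⊗ u + u ⊗ e_{(0,0)})`. -/
noncomputable def psiVec : (Fin 2 × Fin 2) × (Fin 2 × Fin 2) → ℂ :=
  ((1 / (Real.sqrt 2 : ℝ) : ℝ) : ℂ) • (tensVec (e2 0 0) uVec + tensVec uVec (e2 0 0))

/-- The Kronecker product of matrices acts on tensor-product vectors componentwise. -/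
lemma tens_mulVec (A B : Matrix (Fin 2 × Fin 2) (Fin 2 × Fin 2) ℂ) (v w : Fin 2 × Fin 2 → ℂ) :
    (A ⊗ₖ B) *ᵥ tensVec v w = tensVec (A *ᵥ v) (B *ᵥ w) := by
  funext p
  simp only [mulVec, dotProduct, tensVec, kroneckerMap_apply]
  rw [Finset.sum_mul_sum, Fintype.sum_prod_type]
  exact Finset.sum_congr rfl fun a _ => Finset.sum_congr rfl fun b _ => by ring

/-- The oracle maps basis vectors as specified. -/
lemma oracle_e2 (H : Fin 2 → Fin 2) (x y : Fin 2) :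
    oracleU H *ᵥ e2 x y = e2 x (y + H x) := by
  funext p
  simp [mulVec, dotProduct, oracleU, e2, Prod.ext_iff, Fintype.sum_prod_type,
    Fin.sum_univ_succ]
  fin_cases x <;> fin_cases y <;> simp

lemma uVec_eq : uVec = ((Real.sqrt 2:ℝ):ℂ)⁻¹ • (e2 1 0 + e2 1 1) := by
  funext p; simp [uVec, div_eq_mul_inv, mul_comm]

/-- `u` is invariant under the oracle. -/
lemma oracle_u (H : Fin 2 → Fin 2) : oracleU H *ᵥ uVec = uVec := by
  rw [uVec_eq, mulVec_smul, mulVec_add, oracle_e2, oracle_e2]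
  have h : H 1 = 0 ∨ H 1 = 1 := by omega
  rcases h with h | h <;> rw [h]
  · norm_num
  · norm_num
    rw [add_comm]
    rfl

/-- After both parties query the oracle for `H` once on `ψ`, the joint state equals the
cloning map `φ ↦ (u ⊗ φ + φ ⊗ u)/√2` applied to the basis vector `|0, H(0)⟩`. -/
theorem oracle_query_clones (H : Fin 2 → Fin 2) :
    (oracleU H ⊗ₖ oracleU H) *ᵥ psiVec =
      ((1 / (Real.sqrt 2 : ℝ) : ℝ) : ℂ) •
        (tensVec (e2 0 (H 0)) uVec + tensVec uVec (e2 0 (H 0))) := by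
  rw [psiVec, mulVec_smul, mulVec_add, tens_mulVec, tens_mulVec, oracle_e2, oracle_u, zero_add]
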